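/- If a row vector of admissible type (as in the nine-type classification) has an entry deleted, the resulting shorter vector is again of admissible type (or zero); likewise, adding the deleted entry to any other coordinate preserves admissibility. -/

import Mathlib

/-- The nine admissible patterns (up to permutation and overall sign) for the
nonzero entries of a row. -/
def patterns : List (List ℤ) :=
  [[1], [2], [1, 1], [1, -1], [2, -1], [1, 1, -1], [2, -2], [2, -1, -1],
    [1, 1, -1, -1]]

/-- A vector in `ℤ^n` is admissible if, after a permutation of its entries and
possibly a global sign change, it coincides with one of the nine patterns
padded by zeros. -/
def Admissible {n : ℕ} (r : Fin n → ℤ) : Prop :=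
  ∃ l ∈ patterns, ∃ σ : Equiv.Perm (Fin n), ∃ ε : ℤ, (ε = 1 ∨ ε = -1) ∧
    ∀ j : Fin n, ε * r (σ j) = l.getD (j : ℕ) 0

section Aux

/-- The multiset of values of a tuple. -/
private def vals {n : ℕ} (r : Fin n → ℤ) : Multiset ℤ := Multiset.map r Finset.univ.val

/-- The multiset of nonzero elements. -/
private def NZ (s : Multiset ℤ) : Multiset ℤ := Multiset.filter (· ≠ 0) s

private lemma vals_eq_ofFn {n} (r : Fin n → ℤ) : vals r = ↑(List.ofFn r) := by
  rw [vals, Fin.univ_val_map]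

private lemma card_vals {n} (r : Fin n → ℤ) : Multiset.card (vals r) = n := by simp [vals]

private lemma exists_comp_perm {n} {f g : Fin n → ℤ} (h : vals f = vals g) :
    ∃ σ : Equiv.Perm (Fin n), ∀ j, f (σ j) = g j := by
  have hp : (List.ofFn f).Perm (List.ofFn g) := by
    rw [← Multiset.coe_eq_coe, ← vals_eq_ofFn, ← vals_eq_ofFn]; exact h
  have h1 : f ∘ Tuple.sort f = g ∘ Tuple.sort g := by
    apply List.ofFn_injective
    refine List.Perm.eq_of_sortedLE (Tuple.monotone_sort f).sortedLE_ofFn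
      (Tuple.monotone_sort g).sortedLE_ofFn ?_
    exact ((Tuple.sort f).ofFn_comp_perm f).trans
      (hp.trans ((Tuple.sort g).ofFn_comp_perm g).symm)
  refine ⟨(Tuple.sort g).symm.trans (Tuple.sort f), fun j => ?_⟩
  have := congrFun h1 ((Tuple.sort g).symm j)
  simpa using this

private lemma NZ_cons (x : ℤ) (s : Multiset ℤ) :
    NZ (x ::ₘ s) = if x = 0 then NZ s else x ::ₘ NZ s := by
  by_cases hx : x = 0 <;> simp [NZ, Multiset.filter_cons, hx]

private lemma NZ_NZ (s : Multiset ℤ) : NZ (NZ s) = NZ s := by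
  simp [NZ, Multiset.filter_filter]

private lemma NZ_card_le (s : Multiset ℤ) : Multiset.card (NZ s) ≤ Multiset.card s :=
  Multiset.card_le_card (Multiset.filter_le _ s)

private lemma NZ_map_unit {ε : ℤ} (hε : ε ≠ 0) (s : Multiset ℤ) :
    NZ (s.map (ε * ·)) = (NZ s).map (ε * ·) := by
  rw [NZ, NZ, Multiset.filter_map]
  congr 1
  apply Multiset.filter_congr
  intro x _
  simp [hε]

private lemma map_mul_mul (a b : ℤ) (s : Multiset ℤ) :
    s.map (a * b * ·) = (s.map (b * ·)).map (a * ·) := by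
  rw [Multiset.map_map]; congr 1; funext x; simp [mul_assoc]

private lemma sign_mul' {a b : ℤ} (ha : a = 1 ∨ a = -1) (hb : b = 1 ∨ b = -1) :
    a * b = 1 ∨ a * b = -1 := by
  rcases ha with h1 | h1 <;> rcases hb with h2 | h2 <;> simp [h1, h2]

private lemma map_eps {n} (r : Fin n → ℤ) (ε : ℤ) :
    (vals r).map (ε * ·) = vals (fun j => ε * r j) := by
  rw [vals, vals, Multiset.map_map]; rfl

private lemma list_ofFn_getD {n : ℕ} {l : List ℤ} (hlen : l.length ≤ n) :
    (List.ofFn fun j : Fin n => l.getD (j : ℕ) 0) = l ++ List.replicate (n - l.length) 0 := by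
  apply List.ext_getElem
  · simp [Nat.add_sub_cancel' hlen]
  · intro i h1 h2
    simp only [List.getElem_ofFn]
    by_cases hi : i < l.length
    · rw [List.getElem_append_left hi, List.getD_eq_getElem l 0 hi]
    · rw [List.getElem_append_right (by omega), List.getElem_replicate,
        List.getD_eq_default l 0 (by omega)]

private lemma patterns_len : ∀ l ∈ patterns, l.length ≤ 4 := by decide

private lemma take_mem_fin : ∀ l ∈ patterns, ∀ m : Fin 5,
    (l.take (m : ℕ) = [] ∨ l.take (m : ℕ) ∈ patterns) := by decide

private lemma patterns_ne_zero : ∀ l ∈ patterns, ∀ x ∈ l, x ≠ 0 := by decide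

private lemma take_mem : ∀ l ∈ patterns, ∀ m : ℕ, (l.take m = [] ∨ l.take m ∈ patterns) := by
  intro l hl m
  rcases le_or_gt m 4 with hm | hm
  · exact take_mem_fin l hl ⟨m, by omega⟩
  · right
    rw [List.take_of_length_le (by have := patterns_len l hl; omega)]
    exact hl

private lemma pattern_fact1 : ∀ l ∈ patterns, ∀ d ∈ (↑l : Multiset ℤ),
    ((↑l : Multiset ℤ).erase d = 0 ∨
      ∃ l' ∈ patterns, ∃ ε ∈ ([1, -1] : List ℤ),
        Multiset.map (ε * ·) ((↑l : Multiset ℤ).erase d) = ↑l') := by decide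

set_option maxRecDepth 10000 in
private lemma pattern_fact2 : ∀ l ∈ patterns, ∀ c ∈ (↑l : Multiset ℤ),
    ∀ d ∈ (↑l : Multiset ℤ).erase c,
    (NZ ((c + d) ::ₘ (((↑l : Multiset ℤ).erase c).erase d)) = 0 ∨
      ∃ l' ∈ patterns, ∃ ε ∈ ([1, -1] : List ℤ),
        Multiset.map (ε * ·) (NZ ((c + d) ::ₘ (((↑l : Multiset ℤ).erase c).erase d))) = ↑l') := by
  decide

private lemma admissible_of {n} {r : Fin n → ℤ} {ε : ℤ} (hε : ε = 1 ∨ ε = -1)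
    {l : List ℤ} (hl : l ∈ patterns)
    (h : NZ ((vals r).map (ε * ·)) = ↑l) : Admissible r := by
  have hlen : l.length ≤ n := by
    have := NZ_card_le ((vals r).map (ε * ·))
    rw [h] at this
    simpa [card_vals] using this
  have hsplit := Multiset.filter_add_not (fun x : ℤ => x ≠ 0) ((vals r).map (ε * ·))
  have hcard : Multiset.card (Multiset.filter (fun x : ℤ => ¬x ≠ 0) ((vals r).map (ε * ·)))
      = n - l.length := by
    have hc := congrArg Multiset.card hsplit
    rw [Multiset.card_add] at hc
    have h1 : Multiset.card (Multiset.filter (fun x : ℤ => x ≠ 0) ((vals r).map (ε * ·)))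
        = l.length := by
      rw [show Multiset.filter (fun x : ℤ => x ≠ 0) ((vals r).map (ε * ·)) = ↑l from h]; simp
    have h2 : Multiset.card ((vals r).map (ε * ·)) = n := by simp [card_vals]
    omega
  have hzeros : Multiset.filter (fun x : ℤ => ¬x ≠ 0) ((vals r).map (ε * ·))
      = Multiset.replicate (n - l.length) 0 := by
    rw [Multiset.eq_replicate]
    refine ⟨hcard, fun b hb => ?_⟩
    have := Multiset.of_mem_filter hb
    simpa using this
  have hfull : (vals r).map (ε * ·)
      = (l : Multiset ℤ) + Multiset.replicate (n - l.length) 0 := by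
    conv_lhs => rw [← hsplit]
    rw [show Multiset.filter (fun x : ℤ => x ≠ 0) ((vals r).map (ε * ·)) = ↑l from h, hzeros]
  have hg : vals (fun j : Fin n => l.getD (j : ℕ) 0)
      = (l : Multiset ℤ) + Multiset.replicate (n - l.length) 0 := by
    rw [vals_eq_ofFn, list_ofFn_getD hlen]
    rw [← Multiset.coe_add, Multiset.coe_replicate]
  obtain ⟨σ, hσ⟩ := exists_comp_perm (f := fun j => ε * r j)
    (g := fun j : Fin n => l.getD (j : ℕ) 0) (by rw [← map_eps, hfull, hg])
  exact ⟨l, hl, σ, ε, hε, hσ⟩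

private lemma admissible_forward {n} {r : Fin n → ℤ} (h : Admissible r) :
    r = 0 ∨ ∃ ε : ℤ, (ε = 1 ∨ ε = -1) ∧ ∃ l ∈ patterns,
      NZ ((vals r).map (ε * ·)) = ↑l := by
  obtain ⟨l, hl, σ, ε, hε, hσ⟩ := h
  have hε0 : ε ≠ 0 := by rcases hε with h1 | h1 <;> simp [h1]
  have hperm : vals (fun j => ε * r j) = vals (fun j => ε * r (σ j)) := by
    rw [vals, vals]
    have hu : Finset.univ.val.map σ = Finset.univ.val := by
      have := congrArg Finset.val (Finset.map_univ_equiv σ)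
      simpa [Finset.map_val] using this
    conv_lhs => rw [← hu]
    rw [Multiset.map_map]; rfl
  have h2' : (fun j : Fin n => ε * r (σ j)) = (fun j : Fin n => l.getD (j : ℕ) 0) :=
    funext hσ
  rw [h2'] at hperm
  have htake : (fun j : Fin n => l.getD (j : ℕ) 0)
      = (fun j : Fin n => (l.take n).getD (j : ℕ) 0) := by
    funext j
    by_cases hj : (j : ℕ) < l.length
    · rw [List.getD_eq_getElem l 0 hj, List.getD_eq_getElem _ 0 (by simp [j.isLt, hj]),
        List.getElem_take]
    · rw [List.getD_eq_default l 0 (by omega), List.getD_eq_default _ 0 (by simp; omega)]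
  have hvals : (vals r).map (ε * ·)
      = (↑(l.take n) : Multiset ℤ) + Multiset.replicate (n - (l.take n).length) 0 := by
    rw [map_eps, hperm, htake, vals_eq_ofFn, list_ofFn_getD (by simp), ← Multiset.coe_add,
      Multiset.coe_replicate]
  have hNZ : NZ ((vals r).map (ε * ·)) = ↑(l.take n) := by
    rw [hvals, NZ, Multiset.filter_add]
    have e1 : Multiset.filter (· ≠ 0) (↑(l.take n) : Multiset ℤ) = ↑(l.take n) := by
      rw [Multiset.filter_eq_self]
      intro a ha
      exact patterns_ne_zero l hl a (List.mem_of_mem_take (by exact_mod_cast ha))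
    have e2 : Multiset.filter (· ≠ 0)
        (Multiset.replicate (n - (l.take n).length) (0 : ℤ)) = 0 := by
      rw [Multiset.filter_eq_nil]
      intro a ha
      simp [Multiset.eq_of_mem_replicate ha]
    rw [e1, e2, add_zero]
  rcases take_mem l hl n with h0 | hmem
  · left
    funext j
    have hj : ε * r j ∈ (vals r).map (ε * ·) :=
      Multiset.mem_map_of_mem _ (by rw [vals]; exact Multiset.mem_map_of_mem r (Finset.mem_univ j))
    have hz : ε * r j = 0 := by
      by_contra hc
      have hmem : ε * r j ∈ NZ ((vals r).map (ε * ·)) := Multiset.mem_filter_of_mem hj hc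
      rw [hNZ, h0] at hmem
      simpa using hmem
    have := mul_eq_zero.mp hz
    simp only [Pi.zero_apply]
    tauto
  · exact Or.inr ⟨ε, hε, l.take n, hmem, hNZ⟩

private lemma eq_zero_of_NZ_eq_zero {n} {f : Fin n → ℤ} {ε : ℤ} (hε0 : ε ≠ 0)
    (h : NZ ((vals f).map (ε * ·)) = 0) : f = 0 := by
  funext j
  have hj : ε * f j ∈ (vals f).map (ε * ·) :=
    Multiset.mem_map_of_mem _ (by rw [vals]; exact Multiset.mem_map_of_mem f (Finset.mem_univ j))
  have hz : ε * f j = 0 := by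
    by_contra hc
    have hmem : ε * f j ∈ NZ ((vals f).map (ε * ·)) := Multiset.mem_filter_of_mem hj hc
    rw [h] at hmem
    simpa using hmem
  have := mul_eq_zero.mp hz
  simp only [Pi.zero_apply]
  tauto

private lemma vals_succAbove {n} (r : Fin (n + 1) → ℤ) (k : Fin (n + 1)) :
    vals r = r k ::ₘ vals (fun j : Fin n => r (k.succAbove j)) := by
  rw [vals, vals, Fin.univ_succAbove n k, Finset.cons_val, Multiset.map_cons,
    Finset.map_val, Multiset.map_map]
  rfl

end Aux

/-- Deleting an entry from an admissible vector yields an admissible (or zero)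
vector; likewise deleting an entry `x_k` and adding it to another coordinate
`x_m` (`m ≠ k`) yields an admissible (or zero) vector. -/
theorem stmt10 (n : ℕ) (r : Fin (n + 1) → ℤ) (hr : Admissible r)
    (k : Fin (n + 1)) :
    ((fun j : Fin n => r (k.succAbove j)) = 0 ∨
      Admissible (fun j : Fin n => r (k.succAbove j))) ∧
    (∀ m : Fin (n + 1), m ≠ k →
      ((fun j : Fin n => if k.succAbove j = m then r m + r k
          else r (k.succAbove j)) = 0 ∨
        Admissible (fun j : Fin n =>
          if k.succAbove j = m then r m + r k else r (k.succAbove j)))) := by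
  have hne0 : ∀ {ε : ℤ}, (ε = 1 ∨ ε = -1) → ε ≠ 0 := by rintro ε (rfl | rfl) <;> norm_num
  constructor
  · rcases admissible_forward hr with h0 | ⟨ε, hε, l, hl, h⟩
    · left
      funext j
      rw [congrFun h0 (k.succAbove j)]
      rfl
    · have hdec : (vals r).map (ε * ·)
          = (ε * r k) ::ₘ (vals (fun j : Fin n => r (k.succAbove j))).map (ε * ·) := by
        rw [vals_succAbove r k, Multiset.map_cons]
      rw [hdec, NZ_cons] at h
      by_cases hd : ε * r k = 0
      · rw [if_pos hd] at h
        exact Or.inr (admissible_of hε hl h)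
      · rw [if_neg hd] at h
        have hdl : ε * r k ∈ (↑l : Multiset ℤ) := by
          rw [← h]; exact Multiset.mem_cons_self _ _
        have hT : NZ ((vals (fun j : Fin n => r (k.succAbove j))).map (ε * ·))
            = (↑l : Multiset ℤ).erase (ε * r k) := by
          rw [← h, Multiset.erase_cons_head]
        rcases pattern_fact1 l hl _ hdl with h0 | ⟨l', hl', ε', hε', hmap⟩
        · exact Or.inl (eq_zero_of_NZ_eq_zero (hne0 hε) (hT.trans h0))
        · right
          have hε'' : ε' = 1 ∨ ε' = -1 := by simpa using hε'
          refine admissible_of (sign_mul' hε'' hε) hl' ?_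
          rw [map_mul_mul, NZ_map_unit (hne0 hε''), hT, hmap]
  · intro m hmk
    rcases admissible_forward hr with h0 | ⟨ε, hε, l, hl, h⟩
    · left
      funext j
      have hz := congrFun h0
      simp only [Pi.zero_apply] at hz
      by_cases hj : k.succAbove j = m <;> simp [hj, hz]
    cases n with
    | zero =>
      have h1 := m.isLt
      have h2 := k.isLt
      exact absurd (Fin.ext (by omega)) hmk
    | succ n' =>
      obtain ⟨j₀, hj₀⟩ := Fin.exists_succAbove_eq hmk
      set w : Fin (n' + 1) → ℤ := fun j =>
        if k.succAbove j = m then r m + r k else r (k.succAbove j) with hw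
      set u : Fin (n' + 1) → ℤ := fun j => r (k.succAbove j) with hu
      set V : Fin n' → ℤ := fun i => u (j₀.succAbove i) with hV
      have hwu : ∀ i : Fin n', w (j₀.succAbove i) = u (j₀.succAbove i) := by
        intro i
        have h1 : k.succAbove (j₀.succAbove i) ≠ m := by
          rw [← hj₀]
          intro hc
          exact Fin.succAbove_ne j₀ i (Fin.succAbove_right_injective hc)
        simp only [hw, hu, if_neg h1]
      have hvw : vals w = (r m + r k) ::ₘ vals V := by
        rw [vals_succAbove w j₀]
        have e1 : w j₀ = r m + r k := by simp [hw, hj₀]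
        rw [e1]
        congr 1
        rw [vals, vals]
        exact Multiset.map_congr rfl (fun i _ => hwu i)
      have hvu : vals u = r m ::ₘ vals V := by
        rw [vals_succAbove u j₀]
        have e1 : u j₀ = r m := by rw [hu]; simp only [hj₀]
        rw [e1]
      have hvr : vals r = r k ::ₘ vals u := vals_succAbove r k
      set c : ℤ := ε * r m with hc'
      set d : ℤ := ε * r k with hd'
      set T : Multiset ℤ := NZ ((vals V).map (ε * ·)) with hT'
      have hdec : (vals r).map (ε * ·) = d ::ₘ c ::ₘ (vals V).map (ε * ·) := by
        rw [hvr, hvu, Multiset.map_cons, Multiset.map_cons]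
      rw [hdec, NZ_cons, NZ_cons] at h
      have hkey : NZ ((vals w).map (ε * ·)) = NZ ((c + d) ::ₘ T) := by
        rw [hvw, Multiset.map_cons, NZ_cons, NZ_cons, NZ_NZ, ← hT']
        have : ε * (r m + r k) = c + d := by rw [hc', hd', mul_add]
        rw [this]
      by_cases hcz : c = 0 <;> by_cases hdz : d = 0
      · rw [if_pos hdz, if_pos hcz] at h
        right
        refine admissible_of hε hl ?_
        rw [hkey, hcz, hdz, NZ_cons, if_pos (by norm_num), NZ_NZ]
        exact h
      · rw [if_neg hdz, if_pos hcz] at h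
        right
        refine admissible_of hε hl ?_
        rw [hkey, hcz, zero_add, NZ_cons, if_neg hdz, NZ_NZ]
        exact h
      · rw [if_pos hdz, if_neg hcz] at h
        right
        refine admissible_of hε hl ?_
        rw [hkey, hdz, add_zero, NZ_cons, if_neg hcz, NZ_NZ]
        exact h
      · rw [if_neg hdz, if_neg hcz] at h
        -- h : d ::ₘ c ::ₘ T = ↑l
        have hcl : c ∈ (↑l : Multiset ℤ) := by
          rw [← h]
          exact Multiset.mem_cons_of_mem (Multiset.mem_cons_self _ _)
        have herase : (↑l : Multiset ℤ).erase c = d ::ₘ T := by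
          rw [← h, Multiset.cons_swap, Multiset.erase_cons_head]
        have hdl : d ∈ (↑l : Multiset ℤ).erase c := by
          rw [herase]; exact Multiset.mem_cons_self _ _
        have herase2 : ((↑l : Multiset ℤ).erase c).erase d = T := by
          rw [herase, Multiset.erase_cons_head]
        rcases pattern_fact2 l hl c hcl d hdl with h0 | ⟨l', hl', ε', hε', hmap⟩
        · rw [herase2] at h0
          exact Or.inl (eq_zero_of_NZ_eq_zero (hne0 hε) (hkey.trans h0))
        · right
          rw [herase2] at hmap
          have hε'' : ε' = 1 ∨ ε' = -1 := by simpa using hε'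
          refine admissible_of (sign_mul' hε'' hε) hl' ?_
          rw [map_mul_mul, NZ_map_unit (hne0 hε''), hkey, hmap]
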